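/- Every codeword of the generalized affine Cartesian code C_k(𝒜, v) is the evaluation of a polynomial of total degree less than k whose degree in each variable X_i is less than n_i; that is, C_k(𝒜, v) = { ev_k(f) : f ∈ S_{<k} and deg_{X_i}(f) < n_i for all i ∈ {1, …, m} }. -/

import Mathlib

open MvPolynomial

section Aux

variable {K : Type*} [Field K] [DecidableEq K] {m : ℕ}

/-- degree of an exponent vector -/
def dsum (d : Fin m →₀ ℕ) : ℕ := d.sum fun _ e => e

lemma dsum_eq_sum (d : Fin m →₀ ℕ) : dsum d = ∑ x : Fin m, d x :=
  Finsupp.sum_fintype _ _ (fun _ => rfl)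

/-- the vanishing polynomial of `A i` in variable `X i` -/
noncomputable def vanish (A : Fin m → Finset K) (i : Fin m) : MvPolynomial (Fin m) K :=
  ∏ c ∈ A i, (X i - C c)

lemma eval_vanish (A : Fin m → Finset K) (i : Fin m) (x : Fin m → K) (hx : x i ∈ A i) :
    eval x (vanish A i) = 0 := by
  rw [vanish, map_prod]
  exact Finset.prod_eq_zero hx (by simp)

lemma vanish_decomp (A : Fin m → Finset K) (i : Fin m) :
    ∃ r : MvPolynomial (Fin m) K, vanish A i = X i ^ (A i).card + r ∧
      r.support ⊆ (Finset.range (A i).card).image (fun j => Finsupp.single i j) := by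
  set P : Polynomial K := ∏ c ∈ A i, (Polynomial.X - Polynomial.C c) with hP
  have hmon : P.Monic := Polynomial.monic_prod_of_monic _ _ (fun c _ => Polynomial.monic_X_sub_C c)
  have hdeg : P.natDegree = (A i).card := by
    rw [hP, Polynomial.natDegree_prod _ _ (fun c _ => Polynomial.X_sub_C_ne_zero c)]
    simp
  have hv : vanish A i = Polynomial.aeval (X i : MvPolynomial (Fin m) K) P := by
    rw [vanish, hP, map_prod]
    simp [algebraMap_eq]
  refine ⟨∑ j ∈ Finset.range (A i).card, C (P.coeff j) * X i ^ j, ?_, ?_⟩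
  · rw [hv, Polynomial.aeval_eq_sum_range' (n := (A i).card + 1) (by omega) (X i)]
    rw [Finset.sum_range_succ]
    have hlead : P.coeff (A i).card = 1 := by
      have := hmon.coeff_natDegree
      rwa [hdeg] at this
    rw [hlead, one_smul, add_comm]
    congr 1
    apply Finset.sum_congr rfl
    intro j _
    rw [smul_eq_C_mul]
  · refine Finset.Subset.trans support_sum ?_
    intro e he
    simp only [Finset.mem_biUnion] at he
    obtain ⟨j, hj, hje⟩ := he
    rw [C_mul_X_pow_eq_monomial] at hje
    have := support_monomial_subset hje
    simp only [Finset.mem_singleton] at this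
    subst this
    exact Finset.mem_image_of_mem _ hj

/-- measure used for the reduction -/
noncomputable def meas (A : Fin m → Finset K) (f : MvPolynomial (Fin m) K) : ℕ :=
  ∑ d ∈ f.support.filter (fun d => ∃ i, (A i).card ≤ d i),
    ((Finset.univ.sup fun i => (A i).card) + 1) ^ dsum d

lemma sum_union_le_nat {α : Type*} [DecidableEq α] (s t : Finset α) (f : α → ℕ) :
    ∑ x ∈ s ∪ t, f x ≤ ∑ x ∈ s, f x + ∑ x ∈ t, f x := by
  have := Finset.sum_union_inter (s₁ := s) (s₂ := t) (f := f)
  omega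

lemma reduce (A : Fin m → Finset K) (hA : ∀ i, (A i).Nonempty) (k : ℕ) :
    ∀ N (f : MvPolynomial (Fin m) K), meas A f ≤ N → (∀ d ∈ f.support, dsum d < k) →
    ∃ g : MvPolynomial (Fin m) K, (∀ d ∈ g.support, dsum d < k) ∧
      (∀ d ∈ g.support, ∀ i, d i < (A i).card) ∧
      ∀ x : Fin m → K, (∀ i, x i ∈ A i) → eval x f = eval x g := by
  set B := (Finset.univ.sup fun i => (A i).card) + 1 with hB
  intro N
  induction N with
  | zero =>
    intro f hμ hdeg
    by_cases hbad : ∀ d ∈ f.support, ∀ i, d i < (A i).card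
    · exact ⟨f, hdeg, hbad, fun _ _ => rfl⟩
    · exfalso
      push_neg at hbad
      obtain ⟨d, hd, i, hi⟩ := hbad
      have hdf : d ∈ f.support.filter (fun d => ∃ i, (A i).card ≤ d i) :=
        Finset.mem_filter.2 ⟨hd, ⟨i, hi⟩⟩
      have h1 : 1 ≤ B ^ dsum d := Nat.one_le_pow _ _ (by omega)
      have h2 : B ^ dsum d ≤ meas A f := by
        rw [meas, ← hB]
        exact Finset.single_le_sum (f := fun d => B ^ dsum d) (fun _ _ => Nat.zero_le _) hdf
      omega
  | succ N ih =>
    intro f hμ hdeg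
    by_cases hbad : ∀ d ∈ f.support, ∀ i, d i < (A i).card
    · exact ⟨f, hdeg, hbad, fun _ _ => rfl⟩
    push_neg at hbad
    obtain ⟨d, hd, i, hi⟩ := hbad
    set n := (A i).card with hn
    have hn1 : 1 ≤ n := Finset.card_pos.2 (hA i)
    have hnB : n < B := by
      have : n ≤ Finset.univ.sup fun i => (A i).card :=
        Finset.le_sup (f := fun i => (A i).card) (Finset.mem_univ i)
      omega
    set c := coeff d f with hc
    set d' : Fin m →₀ ℕ := d - Finsupp.single i n with hd'
    have hsle : Finsupp.single i n ≤ d := by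
      rw [Finsupp.single_le_iff]; exact hi
    have hd'n : d' + Finsupp.single i n = d := tsub_add_cancel_of_le hsle
    obtain ⟨r, hrdec, hrsupp⟩ := vanish_decomp A i
    set f' := f - monomial d c - monomial d' c * r with hf'
    -- the new monomials
    set T : Finset (Fin m →₀ ℕ) :=
      (Finset.range n).image (fun j => d' + Finsupp.single i j) with hT
    -- pointwise values of new monomials
    have hTlt : ∀ e ∈ T, dsum e < dsum d := by
      intro e he
      rw [hT] at he
      simp only [Finset.mem_image, Finset.mem_range] at he
      obtain ⟨j, hj, rfl⟩ := he
      rw [dsum_eq_sum, dsum_eq_sum]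
      apply Finset.sum_lt_sum
      · intro x _
        rw [hd']
        by_cases hx : x = i
        · subst hx
          simp only [Finsupp.add_apply, Finsupp.tsub_apply, Finsupp.single_eq_same]
          omega
        · simp [Finsupp.single_eq_of_ne' (fun h => hx h.symm)]
      · refine ⟨i, Finset.mem_univ i, ?_⟩
        rw [hd']
        simp only [Finsupp.add_apply, Finsupp.tsub_apply, Finsupp.single_eq_same]
        omega
    -- support of f'
    have hsupp : f'.support ⊆ f.support.erase d ∪ T := by
      intro e he
      rw [mem_support_iff] at he
      have hmr : (monomial d' c * r).support ⊆ T := by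
        refine (support_mul _ _).trans ?_
        intro u hu
        rw [Finset.mem_add] at hu
        obtain ⟨a, ha, b, hb, rfl⟩ := hu
        have ha' := support_monomial_subset ha
        simp only [Finset.mem_singleton] at ha'
        subst ha'
        have hb' := hrsupp hb
        simp only [Finset.mem_image, Finset.mem_range] at hb'
        obtain ⟨j, hj, rfl⟩ := hb'
        rw [hT]
        simp only [Finset.mem_image, Finset.mem_range]
        exact ⟨j, hj, rfl⟩
      by_cases heT : e ∈ (monomial d' c * r).support
      · exact Finset.mem_union_right _ (hmr heT)
      · rw [notMem_support_iff] at heT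
        rw [hf'] at he
        simp only [coeff_sub, heT, sub_zero] at he
        by_cases hed : e = d
        · subst hed
          rw [coeff_monomial] at he
          simp [hc] at he
        · rw [coeff_monomial, if_neg (fun h => hed h.symm), sub_zero] at he
          exact Finset.mem_union_left _ (Finset.mem_erase.2 ⟨hed, mem_support_iff.2 he⟩)
    -- degree hypothesis for f'
    have hdeg' : ∀ e ∈ f'.support, dsum e < k := by
      intro e he
      rcases Finset.mem_union.1 (hsupp he) with h | h
      · exact hdeg e (Finset.mem_of_mem_erase h)
      · exact lt_trans (hTlt e h) (hdeg d hd)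
    -- measure decrease
    have hdsum1 : 1 ≤ dsum d := by
      have : d i ≤ dsum d := by
        rw [dsum_eq_sum]
        exact Finset.single_le_sum (fun _ _ => Nat.zero_le _) (Finset.mem_univ i)
      omega
    have hmeas : meas A f' < meas A f := by
      have hsub : f'.support.filter (fun e => ∃ i, (A i).card ≤ e i) ⊆
          (f.support.erase d).filter (fun e => ∃ i, (A i).card ≤ e i) ∪
          T.filter (fun e => ∃ i, (A i).card ≤ e i) := by
        rw [← Finset.filter_union]
        exact Finset.filter_subset_filter _ hsupp
      have h1 : meas A f' ≤
          ∑ e ∈ (f.support.erase d).filter (fun e => ∃ i, (A i).card ≤ e i), B ^ dsum e +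
          ∑ e ∈ T.filter (fun e => ∃ i, (A i).card ≤ e i), B ^ dsum e := by
        refine le_trans (Finset.sum_le_sum_of_subset hsub) ?_
        exact sum_union_le_nat _ _ _
      have h2 : ∑ e ∈ (f.support.erase d).filter (fun e => ∃ i, (A i).card ≤ e i), B ^ dsum e
          + B ^ dsum d = meas A f := by
        rw [Finset.filter_erase]
        rw [meas, ← hB]
        have hdf : d ∈ f.support.filter (fun e => ∃ i, (A i).card ≤ e i) :=
          Finset.mem_filter.2 ⟨hd, ⟨i, hi⟩⟩
        rw [add_comm]
        exact Finset.add_sum_erase _ (fun e => B ^ dsum e) hdf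
      have h3 : ∑ e ∈ T.filter (fun e => ∃ i, (A i).card ≤ e i), B ^ dsum e < B ^ dsum d := by
        have hb : ∀ e ∈ T.filter (fun e => ∃ i, (A i).card ≤ e i),
            B ^ dsum e ≤ B ^ (dsum d - 1) := by
          intro e he
          have := hTlt e (Finset.mem_of_mem_filter _ he)
          exact Nat.pow_le_pow_right (by omega) (by omega)
        have := Finset.sum_le_card_nsmul _ _ _ hb
        have hcard : (T.filter (fun e => ∃ i, (A i).card ≤ e i)).card ≤ n := by
          refine le_trans (Finset.card_le_card (Finset.filter_subset _ _)) ?_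
          refine le_trans (Finset.card_image_le) (by simp)
        have hlt : (T.filter (fun e => ∃ i, (A i).card ≤ e i)).card • B ^ (dsum d - 1)
            < B ^ dsum d := by
          calc (T.filter (fun e => ∃ i, (A i).card ≤ e i)).card • B ^ (dsum d - 1)
              ≤ n * B ^ (dsum d - 1) := by
                rw [smul_eq_mul]; exact Nat.mul_le_mul_right _ hcard
            _ < B * B ^ (dsum d - 1) := by
                have : 0 < B ^ (dsum d - 1) := Nat.pow_pos (by omega)
                exact (Nat.mul_lt_mul_right this).mpr hnB
            _ = B ^ dsum d := by
                rw [← pow_succ']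
                congr 1
                omega
        omega
      omega
    -- eval invariance
    have heval : ∀ x : Fin m → K, x i ∈ A i → eval x f' = eval x f := by
      intro x hx
      have hkey : f' = f - monomial d' c * vanish A i := by
        rw [hf', hrdec]
        have : (monomial d' c : MvPolynomial (Fin m) K) * X i ^ n = monomial d c := by
          rw [X_pow_eq_monomial, monomial_mul, mul_one, hd'n]
        rw [mul_add, this]
        ring
      rw [hkey, map_sub, map_mul, eval_vanish A i x hx, mul_zero, sub_zero]
    obtain ⟨g, hg1, hg2, hg3⟩ := ih f' (by omega) hdeg'
    exact ⟨g, hg1, hg2, fun x hx => by rw [← heval x (hx i), hg3 x hx]⟩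

end Aux

/-- The points of the Cartesian set `𝒜 = A 0 × ⋯ × A (m-1)`. -/
abbrev CartPts {K : Type*} {m : ℕ} (A : Fin m → Finset K) :=
  { x : Fin m → K // ∀ i, x i ∈ A i }

/-- The space `S_{<k}` of multivariate polynomials of total degree less than `k`. -/
def degLT (K : Type*) [Field K] (m k : ℕ) : Submodule K (MvPolynomial (Fin m) K) where
  carrier := {f | ∀ d ∈ f.support, (d.sum fun _ e => e) < k}
  zero_mem' := by simp
  add_mem' := fun {f g} hf hg d hd => by
    rcases Finset.mem_union.mp (MvPolynomial.support_add hd) with h | h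
    exacts [hf d h, hg d h]
  smul_mem' := fun c f hf d hd => hf d (MvPolynomial.support_smul hd)

/-- The evaluation map `ev : f ↦ (v_a · f(a))_{a ∈ 𝒜}`. -/
noncomputable def evalLM {K : Type*} [Field K] {m : ℕ} (A : Fin m → Finset K)
    (v : CartPts A → K) : MvPolynomial (Fin m) K →ₗ[K] (CartPts A → K) :=
  LinearMap.pi fun a => v a • (MvPolynomial.aeval (a.1 : Fin m → K)).toLinearMap

/-- The generalized affine Cartesian code `C_k(𝒜, v)`, the image of `S_{<k}` under `ev_k`. -/
noncomputable def cartCode {K : Type*} [Field K] {m : ℕ} (k : ℕ) (A : Fin m → Finset K)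
    (v : CartPts A → K) : Submodule K (CartPts A → K) :=
  Submodule.map (evalLM A v) (degLT K m k)

/-- Every codeword of `C_k(𝒜, v)` is the evaluation of a polynomial of total degree `< k` whose
degree in each variable `X_i` is `< n_i`. -/
theorem cartCode_eq_lowDeg_image {K : Type*} [Field K] [Fintype K] [DecidableEq K]
    {m : ℕ} (hm : 1 ≤ m) (A : Fin m → Finset K) (hA : ∀ i, (A i).Nonempty)
    (v : CartPts A → K) (hv : ∀ a, v a ≠ 0) (k : ℕ) (hk : 1 ≤ k) :
    (cartCode k A v : Set (CartPts A → K)) =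
      {c | ∃ f : MvPolynomial (Fin m) K, f.totalDegree < k ∧
        (∀ i, MvPolynomial.degreeOf i f < (A i).card) ∧
        c = fun a => v a * MvPolynomial.eval (a.1 : Fin m → K) f} := by
  have hev : ∀ (f : MvPolynomial (Fin m) K) (a : CartPts A),
      evalLM A v f a = v a * eval (a.1 : Fin m → K) f := by
    intro f a
    simp only [evalLM, LinearMap.pi_apply, LinearMap.smul_apply, AlgHom.toLinearMap_apply,
      smul_eq_mul]
    have h : (aeval (a.1 : Fin m → K)) f = eval (a.1 : Fin m → K) f :=
      RingHom.congr_fun (coe_aeval_eq_eval (a.1 : Fin m → K)) f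
    rw [h]
  ext c
  simp only [SetLike.mem_coe, cartCode, Submodule.mem_map, Set.mem_setOf_eq]
  constructor
  · rintro ⟨f, hf, rfl⟩
    obtain ⟨g, hg1, hg2, hg3⟩ := reduce A hA k (meas A f) f le_rfl hf
    refine ⟨g, ?_, ?_, ?_⟩
    · rw [totalDegree, Finset.sup_lt_iff (show ⊥ < k by exact hk)]
      exact hg1
    · intro i
      rw [degreeOf_lt_iff (Finset.card_pos.2 (hA i))]
      intro e he
      exact hg2 e he i
    · funext a
      rw [hev f a, hg3 a.1 a.2]
  · rintro ⟨f, hdeg, hvar, rfl⟩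
    refine ⟨f, ?_, ?_⟩
    · intro d hd
      exact lt_of_le_of_lt (MvPolynomial.le_totalDegree hd) hdeg
    · funext a
      exact hev f a
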